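/- Let Σ = { y ∈ ℤ_3 : every 3-adic digit of y is 0 or 1 } and let M be a positive integer with M ≡ 2 (mod 3). Then the only 3-adic integer λ with both λ ∈ Σ and M·λ ∈ Σ is λ = 0. -/

import Mathlib

/-- The `j`-th digit of the 3-adic expansion of `y`. -/
noncomputable def padicDigit (y : ℤ_[3]) (j : ℕ) : ℕ := y.appr (j + 1) / 3 ^ j % 3

lemma dvd_sub_appr (x : ℤ_[3]) (n : ℕ) : (3 : ℤ_[3]) ^ n ∣ x - x.appr n := by
  have := PadicInt.appr_spec n x
  rwa [Ideal.mem_span_singleton] at this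

lemma int_dvd_of_dvd (n : ℕ) (a : ℤ) (h : (3 : ℤ_[3]) ^ n ∣ (a : ℤ_[3])) :
    (3 ^ n : ℤ) ∣ a := by
  have h3 : ((3 : ℕ) : ℤ_[3]) = 3 := by norm_cast
  rw [← h3, PadicInt.pow_p_dvd_int_iff] at h
  exact_mod_cast h

lemma appr_unique (x : ℤ_[3]) (n : ℕ) (m : ℕ) (hm : m < 3 ^ n)
    (h : (3 : ℤ_[3]) ^ n ∣ x - (m : ℤ_[3])) : x.appr n = m := by
  have h1 := dvd_sub_appr x n
  have h2 : (3 : ℤ_[3]) ^ n ∣ ((x.appr n : ℤ) - (m : ℤ) : ℤ) := by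
    push_cast
    have := dvd_sub h h1
    have heq : x - (m : ℤ_[3]) - (x - x.appr n) = (x.appr n : ℤ_[3]) - m := by ring
    rwa [heq] at this
  replace h2 := int_dvd_of_dvd _ _ h2
  have := PadicInt.appr_lt x n
  have H1 : (x.appr n : ℤ) < (3:ℤ)^n := by exact_mod_cast this
  have H2 : (m : ℤ) < (3:ℤ)^n := by exact_mod_cast hm
  have h3 : ((x.appr n : ℤ) - (m : ℤ)) = 0 := by
    apply Int.eq_zero_of_abs_lt_dvd h2
    rw [abs_lt]
    omega
  omega

theorem cantor_intersection_trivial_of_two_mod_three (M : ℕ) (hM : 0 < M)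
    (hM3 : M % 3 = 2) (lam : ℤ_[3])
    (h1 : ∀ j, padicDigit lam j ≤ 1)
    (h2 : ∀ j, padicDigit ((M : ℤ_[3]) * lam) j ≤ 1) : lam = 0 := by
  -- main claim: 3^n ∣ lam for all n
  have key : ∀ n, (3 : ℤ_[3]) ^ n ∣ lam := by
    intro n
    induction n with
    | zero => simp
    | succ n ih =>
      -- appr lam (n+1) is divisible by 3^n (as a natural number)
      have hd : (3 : ℤ_[3]) ^ n ∣ (lam.appr (n + 1) : ℤ_[3]) := by
        have h1' : (3 : ℤ_[3]) ^ (n+1) ∣ lam - lam.appr (n+1) := dvd_sub_appr _ _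
        have h2' : (3 : ℤ_[3]) ^ n ∣ lam - lam.appr (n+1) :=
          dvd_trans (pow_dvd_pow _ (Nat.le_succ n)) h1'
        have := dvd_sub ih h2'
        simpa using this
      have hdnat : 3 ^ n ∣ lam.appr (n + 1) := by
        have : (3 : ℤ_[3]) ^ n ∣ ((lam.appr (n+1) : ℤ) : ℤ_[3]) := by exact_mod_cast hd
        have := int_dvd_of_dvd _ _ this
        exact_mod_cast this
      obtain ⟨b, hb⟩ := hdnat
      have hblt : b < 3 := by
        have := PadicInt.appr_lt lam (n + 1)
        rw [hb] at this
        rw [pow_succ] at this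
        nlinarith [pow_pos (show (0:ℕ) < 3 by norm_num) n]
      have hdig : padicDigit lam n = b := by
        unfold padicDigit
        rw [hb, Nat.mul_div_cancel_left _ (pow_pos (by norm_num : (0:ℕ) < 3) n),
          Nat.mod_eq_of_lt hblt]
      -- lam ≡ b * 3^n mod 3^(n+1)
      have hcong : (3 : ℤ_[3]) ^ (n+1) ∣ lam - (b : ℤ_[3]) * 3 ^ n := by
        have h1' : (3 : ℤ_[3]) ^ (n+1) ∣ lam - lam.appr (n+1) := dvd_sub_appr _ _
        have : ((lam.appr (n+1) : ℕ) : ℤ_[3]) = (b : ℤ_[3]) * 3 ^ n := by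
          rw [hb]; push_cast; ring
        rwa [this] at h1'
      have hb1 : b ≤ 1 := hdig ▸ h1 n
      interval_cases b
      · simpa using hcong
      · -- b = 1 : contradiction with h2 n
        exfalso
        -- M*lam ≡ 2*3^n mod 3^(n+1)
        have hQ : (M : ℤ_[3]) = 3 * ((M / 3 : ℕ) : ℤ_[3]) + 2 := by
          have hM' : M = 3 * (M / 3) + 2 := by omega
          calc (M : ℤ_[3]) = ((3 * (M / 3) + 2 : ℕ) : ℤ_[3]) := by rw [← hM']
          _ = _ := by push_cast; ring
        have hMcong : (3 : ℤ_[3]) ^ (n+1) ∣ (M : ℤ_[3]) * lam - ((2 * 3 ^ n : ℕ) : ℤ_[3]) := by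
          obtain ⟨z, hz⟩ := hcong
          have hlam : lam = 3 ^ n + 3 ^ (n+1) * z := by
            push_cast at hz
            linear_combination hz
          refine ⟨((M / 3 : ℕ) : ℤ_[3]) + (3 * ((M / 3 : ℕ) : ℤ_[3]) + 2) * z, ?_⟩
          have h2n : ((2 * 3 ^ n : ℕ) : ℤ_[3]) = 2 * 3 ^ n := by push_cast; norm_num
          rw [hlam, hQ, h2n]
          ring
        have := appr_unique ((M : ℤ_[3]) * lam) (n+1) (2 * 3 ^ n)
          (by have := pow_pos (show 0 < 3 by norm_num) n; rw [pow_succ]; omega)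
          hMcong
        have hd2 : padicDigit ((M : ℤ_[3]) * lam) n = 2 := by
          unfold padicDigit
          rw [this, Nat.mul_comm 2, Nat.mul_div_cancel_left _ (by positivity)]
        have := h2 n
        omega
  -- conclude lam = 0 from divisibility
  by_contra hne
  have hpos : 0 < ‖lam‖ := by simpa [norm_pos_iff] using hne
  obtain ⟨n, hn⟩ := exists_pow_lt_of_lt_one hpos (show (3 : ℝ)⁻¹ < 1 by norm_num)
  have hle : ‖lam‖ ≤ ((3 : ℕ) : ℝ) ^ (-(n : ℤ)) := by
    rw [PadicInt.norm_le_pow_iff_mem_span_pow, Ideal.mem_span_singleton]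
    have h3 : ((3 : ℕ) : ℤ_[3]) = 3 := by norm_cast
    rw [h3]
    exact key n
  rw [zpow_neg, zpow_natCast] at hle
  norm_num at hle
  rw [← inv_pow] at hle
  linarith
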